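/- arXiv:1509.05239 — 2 statements merged into one kernel-verified Lean document; each statement's English description precedes it below -/
import Mathlib

section
/- For the TRIP-Stern sequence for (e,e,13), the maximal terms lie on the right-most path of the tree: for every n and every word v ∈ {0,1}ⁿ, each of the three entries of Δ(v) is at most the first entry of f₁ⁿ(1,1,1); hence the maximum entry m_n of level n equals the first entry of f₁ⁿ(1,1,1). -/
/-- `f₀(a,b,c) = (b,c,a+c)` for the triplet `(e,e,13)`. -/
def f0 (p : ℤ × ℤ × ℤ) : ℤ × ℤ × ℤ := (p.2.1, p.2.2, p.1 + p.2.2)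

/-- `f₁(a,b,c) = (a+c,b,a)` for the triplet `(e,e,13)`. -/
def f1 (p : ℤ × ℤ × ℤ) : ℤ × ℤ × ℤ := (p.1 + p.2.2, p.2.1, p.1)

/-- One step of the TRIP-Stern tree: apply `f₁` on a `true` and `f₀` on a `false`. -/
def step (p : ℤ × ℤ × ℤ) (i : Bool) : ℤ × ℤ × ℤ := if i then f1 p else f0 p

/-- `Δ(v) = f_{iₙ}(⋯ f_{i₁}(1,1,1) ⋯)`, applying `f_{i₁}` first. -/
def delta (v : List Bool) : ℤ × ℤ × ℤ := v.foldl step (1, 1, 1)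

/-- The maximum coordinate of a triple. -/
def maxEntry (p : ℤ × ℤ × ℤ) : ℤ := max p.1 (max p.2.1 p.2.2)

/-- `m n` is the maximum entry of level `n` of the TRIP-Stern sequence for `(e,e,13)`. -/
noncomputable def m (n : ℕ) : ℤ :=
  Finset.sup' Finset.univ Finset.univ_nonempty
    (fun v : Fin n → Bool => maxEntry (delta (List.ofFn v)))

/-- The Fibonacci bound `g n = fib (n+2)`. -/
def g (n : ℕ) : ℤ := Nat.fib (n+2)

lemma g_mono {a b : ℕ} (h : a ≤ b) : g a ≤ g b := by
  unfold g
  exact_mod_cast Nat.fib_mono (by omega)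

lemma g_rec (n : ℕ) : g (n+2) = g n + g (n+1) := by
  unfold g
  push_cast [Nat.fib_add_two]
  ring

lemma iterA (n : ℕ) : f1^[n] (1,1,1) = (g n, 1, (Nat.fib (n+1) : ℤ)) := by
  induction n with
  | zero => simp [g]
  | succ k ih =>
      rw [Function.iterate_succ_apply', ih]
      simp only [f1, g]
      refine Prod.ext ?_ (Prod.ext rfl ?_) <;> simp [Nat.fib_add_two] <;> push_cast <;> ring

lemma invariant (v : List Bool) :
    (delta v).1 ≤ g v.length ∧ (delta v).2.1 ≤ g v.length ∧
    (delta v).2.2 ≤ g v.length ∧ (delta v).1 + (delta v).2.2 ≤ g (v.length + 1) := by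
  induction v using List.reverseRecOn with
  | nil => simp [delta, g]; decide
  | append_singleton v i ih =>
      obtain ⟨h1, h2, h3, h4⟩ := ih
      have hd : delta (v ++ [i]) = step (delta v) i := by
        simp [delta, List.foldl_append]
      have hlen : (v ++ [i]).length = v.length + 1 := by simp
      rw [hd, hlen]
      have hm : g v.length ≤ g (v.length + 1) := g_mono (by omega)
      have hr : g (v.length + 1 + 1) = g v.length + g (v.length + 1) := g_rec _
      cases i <;> simp [step, f0, f1] <;> refine ⟨?_, ?_, ?_, ?_⟩ <;> omega

lemma replicate_true (n : ℕ) : delta (List.replicate n true) = f1^[n] (1,1,1) := by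
  suffices h : ∀ p, (List.replicate n true).foldl step p = f1^[n] p from h _
  induction n with
  | zero => intro p; simp
  | succ k ih =>
      intro p
      rw [List.replicate_succ, List.foldl_cons, Function.iterate_succ_apply]
      exact ih _

/-- For the TRIP-Stern sequence for `(e,e,13)`, the maximal terms lie on the right-most
path of the tree: every entry of every level-`n` triple `Δ(v)` is at most the first
entry of `f₁ⁿ(1,1,1)`, and hence the maximum entry `m n` of level `n` equals the first
entry of `f₁ⁿ(1,1,1)`. -/
theorem maxTerms_rightmost_ee13 :
    (∀ (n : ℕ) (v : Fin n → Bool),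
      (delta (List.ofFn v)).1 ≤ (f1^[n] (1, 1, 1)).1 ∧
      (delta (List.ofFn v)).2.1 ≤ (f1^[n] (1, 1, 1)).1 ∧
      (delta (List.ofFn v)).2.2 ≤ (f1^[n] (1, 1, 1)).1) ∧
    (∀ n : ℕ, m n = (f1^[n] (1, 1, 1)).1) := by
  have hfst : ∀ n : ℕ, (f1^[n] (1, 1, 1)).1 = g n := by
    intro n; rw [iterA]
  have hbound : ∀ (n : ℕ) (v : Fin n → Bool),
      (delta (List.ofFn v)).1 ≤ g n ∧ (delta (List.ofFn v)).2.1 ≤ g n ∧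
      (delta (List.ofFn v)).2.2 ≤ g n := by
    intro n v
    have h := invariant (List.ofFn v)
    rw [List.length_ofFn] at h
    exact ⟨h.1, h.2.1, h.2.2.1⟩
  constructor
  · intro n v
    rw [hfst]
    exact hbound n v
  · intro n
    rw [hfst]
    apply le_antisymm
    · apply Finset.sup'_le
      intro v _
      obtain ⟨h1, h2, h3⟩ := hbound n v
      simp only [maxEntry]
      exact max_le h1 (max_le h2 h3)
    · have hv : delta (List.ofFn (fun _ : Fin n => true)) = f1^[n] (1,1,1) := by
        rw [List.ofFn_const]
        exact replicate_true n
      have := Finset.le_sup' (fun v : Fin n → Bool => maxEntry (delta (List.ofFn v)))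
        (Finset.mem_univ (fun _ : Fin n => true))
      refine le_trans ?_ this
      rw [hv, iterA]
      simp [maxEntry]
end

section
/- For the TRIP-Stern sequence for (e,e,13), the maximum entry m_n of level n equals the Fibonacci number Fib(n+2) (where Fib(1) = Fib(2) = 1); in particular m_0 = 1, m_1 = 2, and m_n = m_{n-1} + m_{n-2} for all n ≥ 2. -/
def TSInv (n : ℕ) (p : ℤ × ℤ × ℤ) : Prop :=
  p.1 ≤ (Nat.fib (n+2) : ℤ) ∧ p.2.1 ≤ (Nat.fib (n+1) : ℤ) ∧
  p.2.2 ≤ (Nat.fib (n+2) : ℤ) ∧ p.1 + p.2.2 ≤ (Nat.fib (n+3) : ℤ)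

lemma fib_cast_add (n : ℕ) : (Nat.fib (n+2) : ℤ) = Nat.fib (n+1) + Nat.fib n := by
  rw [Nat.fib_add_two]; push_cast; ring

lemma fib_mono_cast {a b : ℕ} (h : a ≤ b) : (Nat.fib a : ℤ) ≤ Nat.fib b := by
  exact_mod_cast Nat.fib_mono h

lemma delta_append (l : List Bool) (i : Bool) :
    delta (l ++ [i]) = step (delta l) i := by
  simp [delta, List.foldl_append]

lemma tsinv_delta (l : List Bool) : TSInv l.length (delta l) := by
  induction l using List.reverseRecOn with
  | nil => refine ⟨?_, ?_, ?_, ?_⟩ <;> simp [delta, Nat.fib]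
  | append_singleton l i ih =>
    obtain ⟨h1, h2, h3, h4⟩ := ih
    rw [delta_append]
    have len : (l ++ [i]).length = l.length + 1 := by simp
    rw [len]
    have e1 := fib_cast_add (l.length + 2)
    have e2 : (Nat.fib (l.length + 1 + 3) : ℤ) = Nat.fib (l.length + 2 + 2) := by norm_num
    have m1 := fib_mono_cast (show l.length + 1 ≤ l.length + 2 by omega)
    have m2 := fib_mono_cast (show l.length + 2 ≤ l.length + 3 by omega)
    cases i <;>
      simp only [step, f0, f1, if_true, if_false, Bool.false_eq_true, TSInv] <;>
      refine ⟨?_, ?_, ?_, ?_⟩ <;> push_cast at * <;> linarith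

lemma delta_replicate (n : ℕ) :
    delta (List.replicate n true) = ((Nat.fib (n+2) : ℤ), 1, (Nat.fib (n+1) : ℤ)) := by
  induction n with
  | zero => simp [delta]
  | succ n ih =>
    rw [List.replicate_succ', delta_append, ih]
    simp only [step, f1, if_true]
    refine Prod.ext ?_ (Prod.ext rfl rfl)
    simp only []
    rw [show n + 1 + 2 = n + 3 from rfl, fib_cast_add (n+1)]

lemma m_eq (n : ℕ) : (Finset.sup' Finset.univ Finset.univ_nonempty
    (fun v : Fin n → Bool => maxEntry (delta (List.ofFn v)))) = (Nat.fib (n + 2) : ℤ) := by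
  apply le_antisymm
  · apply Finset.sup'_le
    intro v _
    have h := tsinv_delta (List.ofFn v)
    rw [List.length_ofFn] at h
    obtain ⟨h1, h2, h3, _⟩ := h
    have := fib_mono_cast (show n+1 ≤ n+2 by omega)
    simp only [maxEntry, max_le_iff]
    exact ⟨h1, h2.trans this, h3⟩
  · have : (fun _ => true : Fin n → Bool) ∈ Finset.univ := Finset.mem_univ _
    refine le_trans ?_ (Finset.le_sup' _ this)
    rw [show List.ofFn (fun _ => true : Fin n → Bool) = List.replicate n true by
      simp [List.ofFn_const], delta_replicate]
    have h1 : (1:ℤ) ≤ Nat.fib (n+2) := by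
      exact_mod_cast (Nat.fib_pos.mpr (by omega))
    have h2 := fib_mono_cast (show n+1 ≤ n+2 by omega)
    simp [maxEntry]

lemma m_fib (n : ℕ) : m n = (Nat.fib (n + 2) : ℤ) := m_eq n

/-- For the TRIP-Stern sequence for `(e,e,13)`, the maximum entry of level `n` is the
Fibonacci number `Fib(n+2)` (with `Fib 1 = Fib 2 = 1`); in particular `m 0 = 1`,
`m 1 = 2`, and `m n = m (n-1) + m (n-2)` for all `n ≥ 2`. -/
theorem maxTerms_fib_ee13 :
    (∀ n : ℕ, m n = (Nat.fib (n + 2) : ℤ)) ∧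
    m 0 = 1 ∧ m 1 = 2 ∧
    (∀ n : ℕ, 2 ≤ n → m n = m (n - 1) + m (n - 2)) := by
  refine ⟨m_fib, by rw [m_fib]; norm_num, by rw [m_fib]; norm_num, fun n hn => ?_⟩
  rw [m_fib, m_fib, m_fib, show n - 1 + 2 = n + 1 by omega, show n - 2 + 2 = n by omega]
  rw [show n + 2 = n + 1 + 1 by ring, Nat.fib_add_one (by omega)]
  push_cast
  ring
end
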